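/- arXiv:2512.18697 — 2 statements merged into one kernel-verified Lean document; each statement's English description precedes it below -/
import Mathlib

section
/- Let p ∈ (1,∞), r > 0, λ ∈ ℝ \ {0}, and let v : ℝ^d → ℝ^m be Q₁-periodic and locally p-integrable. Then ∫_{B_{2r}} ∫_{Q₁} |(v(x+λξ)-v(x))/λ|^p dx dξ ≤ 2^{d+p} ∫_{B_r} ∫_{Q₁} |(v(x+λξ)-v(x))/λ|^p dx dξ, where B_r denotes the Euclidean ball of radius r centered at the origin in ℝ^d. -/
open MeasureTheory Set Metric Submodule ZSpan Pointwise

noncomputable def bb (d : ℕ) : Module.Basis (Fin d) ℝ (EuclideanSpace ℝ (Fin d)) :=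
  (EuclideanSpace.basisFun (Fin d) ℝ).toBasis

abbrev ZL (d : ℕ) : AddSubgroup (EuclideanSpace ℝ (Fin d)) :=
  (span ℤ (Set.range (bb d))).toAddSubgroup

def Q1c (d : ℕ) : Set (EuclideanSpace ℝ (Fin d)) := {x | ∀ i, x i ∈ Set.Ioo (0:ℝ) 1}

lemma rpow_add_le_aux {x y : ℝ} (hx : 0 ≤ x) (hy : 0 ≤ y) {p : ℝ} (hp : 1 ≤ p) :
    (x + y) ^ p ≤ 2 ^ (p - 1) * (x ^ p + y ^ p) := by
  lift x to NNReal using hx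
  lift y to NNReal using hy
  have := NNReal.rpow_add_le_mul_rpow_add_rpow x y hp
  exact_mod_cast this

lemma norm_rpow_add_le {F : Type*} [NormedAddCommGroup F] (a b : F) {p : ℝ} (hp : 1 ≤ p) :
    ‖a + b‖ ^ p ≤ 2 ^ (p - 1) * (‖a‖ ^ p + ‖b‖ ^ p) := by
  refine le_trans ?_ (rpow_add_le_aux (norm_nonneg a) (norm_nonneg b) hp)
  exact Real.rpow_le_rpow (norm_nonneg _) (norm_add_le a b) (by linarith)

section aux
variable {d m : ℕ}
local notation "E" => EuclideanSpace ℝ (Fin d)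

lemma ae_shift {Q : E → Prop} (h : ∀ᵐ x : E, Q x) (c : E) : ∀ᵐ x : E, Q (x + c) :=
  (measurePreserving_add_right volume c).quasiMeasurePreserving.ae h

lemma per_lattice (v : E → EuclideanSpace ℝ (Fin m))
    (hper : ∀ i : Fin d, ∀ᵐ x : E, v (x + EuclideanSpace.single i (1:ℝ)) = v x) :
    ∀ y ∈ span ℤ (Set.range (bb d)), ∀ᵐ x : E, v (x + y) = v x := by
  have hadd : ∀ y z : E, (∀ᵐ x : E, v (x + y) = v x) → (∀ᵐ x : E, v (x + z) = v x) →
      ∀ᵐ x : E, v (x + (y + z)) = v x := by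
    intro y z hy hz
    filter_upwards [ae_shift hz y, hy] with x h1 h2
    rw [← add_assoc, h1, h2]
  have hneg : ∀ y : E, (∀ᵐ x : E, v (x + y) = v x) → ∀ᵐ x : E, v (x + -y) = v x := by
    intro y hy
    filter_upwards [ae_shift hy (-y)] with x h1
    rw [neg_add_cancel_right] at h1; rw [h1]
  intro y hy
  induction hy using Submodule.span_induction with
  | mem y hmem =>
      obtain ⟨i, rfl⟩ := hmem
      have : bb d i = EuclideanSpace.single i (1:ℝ) := by
        simp [bb, EuclideanSpace.basisFun_apply]
      rw [this]; exact hper i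
  | zero => simp
  | add y z _ _ hy hz => exact hadd y z hy hz
  | smul n y _ hy =>
      induction n using Int.induction_on with
      | zero => simp
      | succ k hk =>
          rw [show ((k:ℤ)+1) • y = (k:ℤ) • y + y by rw [add_smul, one_smul]]
          exact hadd _ _ hk hy
      | pred k hk =>
          rw [show (-(k:ℤ)-1) • y = (-(k:ℤ)) • y + -y by
            rw [sub_smul, neg_smul, one_smul, sub_eq_add_neg]]
          exact hadd _ _ hk (hneg y hy)

lemma Q1_measurable : MeasurableSet (Q1c d) := by
  have : Q1c d = ⋂ i, (fun x : E => x i) ⁻¹' (Set.Ioo (0:ℝ) 1) := by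
    ext x; simp [Q1c]
  rw [this]
  exact MeasurableSet.iInter fun i =>
    ((EuclideanSpace.proj i : EuclideanSpace ℝ (Fin d) →L[ℝ] ℝ).continuous.measurable) measurableSet_Ioo

lemma Q1_subset_fd : Q1c d ⊆ fundamentalDomain (bb d) := by
  intro x hx i
  have := hx i
  simp only [fundamentalDomain, Set.mem_Ico, Set.mem_setOf_eq]
  constructor
  · exact le_of_lt (by simpa [bb, EuclideanSpace.basisFun_repr] using this.1)
  · simpa [bb, EuclideanSpace.basisFun_repr] using this.2

lemma fd_diff_null (hd : 1 ≤ d) :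
    volume (fundamentalDomain (bb d) \ Q1c d) = 0 := by
  have hsub : fundamentalDomain (bb d) \ Q1c d ⊆ ⋃ i, {x : E | x i = 0} := by
    intro x hx
    obtain ⟨h1, h2⟩ := hx
    simp only [Q1c, Set.mem_setOf_eq, not_forall] at h2
    obtain ⟨i, hi⟩ := h2
    have hico : x i ∈ Set.Ico (0:ℝ) 1 := by
      simpa [bb, EuclideanSpace.basisFun_repr] using h1 i
    refine Set.mem_iUnion.2 ⟨i, ?_⟩
    simp only [Set.mem_setOf_eq]
    rcases eq_or_lt_of_le hico.1 with h | h
    · exact h.symm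
    · exact absurd ⟨h, hico.2⟩ hi
  refine measure_mono_null hsub (measure_iUnion_null fun i => ?_)
  have : {x : E | x i = 0} = (LinearMap.ker ((EuclideanSpace.proj i : EuclideanSpace ℝ (Fin d) →L[ℝ] ℝ) : EuclideanSpace ℝ (Fin d) →ₗ[ℝ] ℝ) : Submodule ℝ E) := by
    ext x; simp [LinearMap.mem_ker, PiLp.proj_apply]
  rw [this]
  refine Measure.addHaar_submodule _ _ ?_
  intro htop
  have h1 : EuclideanSpace.single i (1:ℝ) ∈ LinearMap.ker ((EuclideanSpace.proj i : EuclideanSpace ℝ (Fin d) →L[ℝ] ℝ) : EuclideanSpace ℝ (Fin d) →ₗ[ℝ] ℝ) := by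
    rw [htop]; trivial
  simp [LinearMap.mem_ker, PiLp.proj_apply, EuclideanSpace.single_apply] at h1

lemma fdQ1 (hd : 1 ≤ d) : IsAddFundamentalDomain (ZL d) (Q1c d) volume := by
  have hD := ZSpan.isAddFundamentalDomain' (bb d) volume
  refine ⟨Q1_measurable.nullMeasurableSet, ?_, ?_⟩
  · have hnull : ∀ g : ZL d, volume {x : E | (g : E) + x ∈ fundamentalDomain (bb d) \ Q1c d} = 0 := by
      intro g
      have := (measurePreserving_add_left volume (g : E)).quasiMeasurePreserving
      have h0 := fd_diff_null (d := d) hd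
      have : volume ((fun x : E => (g : E) + x) ⁻¹' (fundamentalDomain (bb d) \ Q1c d)) = 0 := by
        rw [(measurePreserving_add_left volume (g : E)).measure_preimage
          (by
            exact ((ZSpan.fundamentalDomain_measurableSet (bb d)).diff Q1_measurable).nullMeasurableSet)]
        exact h0
      exact this
    have hcount : Countable (ZL d) := inferInstanceAs (Countable (span ℤ (Set.range (bb d))))
    have hae : ∀ᵐ x : E, ∀ g : ZL d, (g : E) + x ∉ fundamentalDomain (bb d) \ Q1c d := by
      rw [ae_all_iff]
      intro g
      rw [ae_iff]
      simpa using hnull g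
    filter_upwards [hD.ae_covers, hae] with x ⟨g, hg⟩ hall
    refine ⟨g, ?_⟩
    have hg' : (g : E) + x ∈ fundamentalDomain (bb d) := hg
    by_contra hne
    exact hall g ⟨hg', hne⟩
  · intro g g' hgg'
    exact (hD.aedisjoint hgg').mono
      (Set.vadd_set_mono Q1_subset_fd) (Set.vadd_set_mono Q1_subset_fd)

lemma fdQ1_shift (hd : 1 ≤ d) (τ : E) :
    IsAddFundamentalDomain (ZL d) ((fun x => x + τ) '' Q1c d) volume := by
  have hco : ⇑(Equiv.addRight τ) = fun x : E => x + τ := rfl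
  rw [← hco]
  refine (fdQ1 hd).image_of_equiv (Equiv.addRight τ) ?_ (Equiv.refl _) ?_
  · have : ⇑(Equiv.addRight τ).symm = fun x : E => x + (-τ) := by
      funext x; simp [Equiv.addRight, sub_eq_add_neg]
    rw [this]
    exact (measurePreserving_add_right volume (-τ)).quasiMeasurePreserving
  · intro g x
    show (g : E) + x + τ = (g : E) + (x + τ)
    abel

lemma shift_integral (hd : 1 ≤ d) (w : E → ℝ)
    (hw : ∀ g : ZL d, ∀ᵐ x : E, w ((g : E) + x) = w x) (τ : E) :
    ∫ x in Q1c d, w (x + τ) = ∫ x in Q1c d, w x := by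
  classical
  set S : Set E := {x | ∀ g : ZL d, w ((g : E) + x) = w x} with hS
  set w' : E → ℝ := S.indicator w with hw'
  have hinv : ∀ (g : ZL d) (x : E), w' (g +ᵥ x) = w' x := by
    intro g x
    have hmem : (g : E) + x ∈ S ↔ x ∈ S := by
      constructor
      · intro h g'
        have h1 := h (g' - g)
        have h2 := h (-g)
        simp only [AddSubgroup.coe_sub, NegMemClass.coe_neg] at h1 h2
        rw [show ((g':E) - g) + ((g:E) + x) = (g':E) + x by abel] at h1
        rw [show (-(g:E)) + ((g:E) + x) = x by abel] at h2
        rw [h1, ← h2]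
      · intro h g'
        have h1 := h (g' + g)
        have h2 := h g
        simp only [AddSubgroup.coe_add] at h1
        rw [show ((g':E) + g) + x = (g':E) + ((g:E) + x) by abel] at h1
        rw [h1, h2]
    show w' ((g : E) + x) = w' x
    rw [hw']
    by_cases hx : x ∈ S
    · rw [Set.indicator_of_mem (hmem.2 hx), Set.indicator_of_mem hx]
      exact hx g
    · rw [Set.indicator_of_notMem (fun h => hx (hmem.1 h)), Set.indicator_of_notMem hx]
  have hcount : Countable (ZL d) := inferInstanceAs (Countable (span ℤ (Set.range (bb d))))
  have hSae : ∀ᵐ x : E, x ∈ S := by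
    have h' : ∀ᵐ x : E, ∀ g : ZL d, w ((g : E) + x) = w x := ae_all_iff.2 hw
    exact h'
  have hww' : w' =ᵐ[volume] w := by
    filter_upwards [hSae] with x hx
    exact Set.indicator_of_mem hx _
  have step1 : ∫ x in Q1c d, w (x + τ) = ∫ y in (fun x => x + τ) '' Q1c d, w y := by
    rw [MeasurePreserving.setIntegral_image_emb (measurePreserving_add_right volume τ)
      (measurableEmbedding_addRight τ) w (Q1c d)]
  rw [step1]
  have step2 : ∫ y in (fun x => x + τ) '' Q1c d, w y
      = ∫ y in (fun x => x + τ) '' Q1c d, w' y :=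
    integral_congr_ae (ae_restrict_of_ae hww'.symm)
  have step3 : ∫ y in (fun x => x + τ) '' Q1c d, w' y = ∫ y in Q1c d, w' y :=
    (fdQ1_shift hd τ).setIntegral_eq (fdQ1 hd) hinv
  have step4 : ∫ y in Q1c d, w' y = ∫ y in Q1c d, w y :=
    integral_congr_ae (ae_restrict_of_ae hww')
  rw [step2, step3, step4]

lemma norm_le_sqrt_of_memQ1 {x : E} (hx : x ∈ Q1c d) : ‖x‖ ≤ Real.sqrt d := by
  rw [EuclideanSpace.norm_eq]
  apply Real.sqrt_le_sqrt
  calc ∑ i, ‖x i‖ ^ 2 ≤ ∑ _i : Fin d, (1:ℝ) := by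
        apply Finset.sum_le_sum
        intro i _
        have := hx i
        have h1 : ‖x i‖ ≤ 1 := by
          rw [Real.norm_eq_abs, abs_of_pos this.1]; exact le_of_lt this.2
        calc ‖x i‖ ^ 2 ≤ 1 ^ 2 := pow_le_pow_left₀ (norm_nonneg _) h1 2
        _ = 1 := one_pow 2
    _ = (d : ℝ) := by simp

end aux

/-- doubling estimate for difference quotients of a `Q₁`-periodic
locally `p`-integrable function. -/
theorem stmt1 (d m : ℕ) (hd : 1 ≤ d) (hm : 1 ≤ m) (p : ℝ) (hp : 1 < p)
    (r : ℝ) (hr : 0 < r) (lam : ℝ) (hlam : lam ≠ 0)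
    (v : EuclideanSpace ℝ (Fin d) → EuclideanSpace ℝ (Fin m))
    (hv : Measurable v)
    (hper : ∀ i : Fin d, ∀ᵐ x : EuclideanSpace ℝ (Fin d),
      v (x + EuclideanSpace.single i (1:ℝ)) = v x)
    (hloc : ∀ K : Set (EuclideanSpace ℝ (Fin d)), IsCompact K →
      IntegrableOn (fun x => ‖v x‖ ^ p) K volume)
    (Q1 : Set (EuclideanSpace ℝ (Fin d)))
    (hQ1 : Q1 = {x | ∀ i, x i ∈ Set.Ioo (0:ℝ) 1}) :
    (∫ ξ in ball (0 : EuclideanSpace ℝ (Fin d)) (2 * r),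
        ∫ x in Q1, ‖lam⁻¹ • (v (x + lam • ξ) - v x)‖ ^ p)
      ≤ (2:ℝ) ^ ((d : ℝ) + p) *
        ∫ ξ in ball (0 : EuclideanSpace ℝ (Fin d)) r,
          ∫ x in Q1, ‖lam⁻¹ • (v (x + lam • ξ) - v x)‖ ^ p := by
  have hp1 : (1:ℝ) ≤ p := le_of_lt hp
  obtain rfl : Q1 = Q1c d := hQ1
  set F : EuclideanSpace ℝ (Fin d) → ℝ :=
    fun ξ => ∫ x in Q1c d, ‖lam⁻¹ • (v (x + lam • ξ) - v x)‖ ^ p with hF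
  -- pointwise triangle bound on vectors
  have hb : ∀ a b : EuclideanSpace ℝ (Fin m),
      ‖lam⁻¹ • (a - b)‖ ^ p ≤ |lam⁻¹| ^ p * (2 ^ (p-1) * (‖a‖ ^ p + ‖b‖ ^ p)) := by
    intro a b
    rw [norm_smul, Real.norm_eq_abs,
      Real.mul_rpow (abs_nonneg _) (norm_nonneg _)]
    apply mul_le_mul_of_nonneg_left _ (Real.rpow_nonneg (abs_nonneg _) _)
    calc ‖a - b‖ ^ p = ‖a + -b‖ ^ p := by rw [sub_eq_add_neg]
      _ ≤ 2 ^ (p-1) * (‖a‖ ^ p + ‖-b‖ ^ p) := norm_rpow_add_le a (-b) hp1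
      _ = 2 ^ (p-1) * (‖a‖ ^ p + ‖b‖ ^ p) := by rw [norm_neg]
  -- integrability of shifted p-norms on the cube
  have hKint : ∀ c : EuclideanSpace ℝ (Fin d),
      IntegrableOn (fun x => ‖v (x + c)‖ ^ p) (Q1c d) volume := by
    intro c
    have hK : IsCompact (closedBall (0 : EuclideanSpace ℝ (Fin d)) (Real.sqrt d + ‖c‖)) :=
      isCompact_closedBall _ _
    have h1 : IntegrableOn ((fun x => ‖v x‖ ^ p) ∘ (fun x => x + c))
        ((fun x => x + c) ⁻¹' (closedBall 0 (Real.sqrt d + ‖c‖))) volume :=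
      ((measurePreserving_add_right volume c).integrableOn_comp_preimage
        (measurableEmbedding_addRight c)).2 (hloc _ hK)
    refine (h1.mono_set ?_)
    intro x hx
    simp only [Set.mem_preimage, mem_closedBall, dist_zero_right]
    calc ‖x + c‖ ≤ ‖x‖ + ‖c‖ := norm_add_le _ _
      _ ≤ Real.sqrt d + ‖c‖ := by
          have := norm_le_sqrt_of_memQ1 hx
          linarith
  have hKint0 : IntegrableOn (fun x => ‖v x‖ ^ p) (Q1c d) volume := by
    have := hKint 0
    simpa using this
  -- measurability of difference-quotient integrands
  have hmeas : ∀ c₁ c₂ : EuclideanSpace ℝ (Fin d),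
      Measurable (fun x => ‖lam⁻¹ • (v (x + c₁) - v (x + c₂))‖ ^ p) := by
    intro c₁ c₂; fun_prop
  have hmeas0 : ∀ c₁ : EuclideanSpace ℝ (Fin d),
      Measurable (fun x => ‖lam⁻¹ • (v (x + c₁) - v x)‖ ^ p) := by
    intro c₁; fun_prop
  -- integrability of difference quotients
  have hintD : ∀ c₁ c₂ : EuclideanSpace ℝ (Fin d),
      IntegrableOn (fun x => ‖lam⁻¹ • (v (x + c₁) - v (x + c₂))‖ ^ p) (Q1c d) volume := by
    intro c₁ c₂
    refine Integrable.mono'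
      (g := fun x => |lam⁻¹| ^ p * (2 ^ (p-1) * (‖v (x + c₁)‖ ^ p + ‖v (x + c₂)‖ ^ p)))
      ((((hKint c₁).add (hKint c₂)).const_mul _).const_mul _)
      ((hmeas c₁ c₂).aestronglyMeasurable.restrict) ?_
    apply Filter.Eventually.of_forall
    intro x
    rw [Real.norm_eq_abs, abs_of_nonneg (Real.rpow_nonneg (norm_nonneg _) _)]
    exact hb _ _
  have hintD0 : ∀ c₁ : EuclideanSpace ℝ (Fin d),
      IntegrableOn (fun x => ‖lam⁻¹ • (v (x + c₁) - v x)‖ ^ p) (Q1c d) volume := by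
    intro c₁
    have := hintD c₁ 0
    simpa using this
  have hFnonneg : ∀ ξ, 0 ≤ F ξ := fun ξ =>
    integral_nonneg fun x => Real.rpow_nonneg (norm_nonneg _) _
  -- key doubling inequality
  have hkey : ∀ ξ : EuclideanSpace ℝ (Fin d), F ((2:ℝ) • ξ) ≤ 2 ^ p * F ξ := by
    intro ξ
    have hsm : lam • ((2:ℝ) • ξ) = lam • ξ + lam • ξ := by
      rw [smul_smul, mul_comm, two_mul, add_smul]
    have h2 : (2:ℝ) ^ (p-1) * 2 = 2 ^ p := by
      rw [Real.rpow_sub two_pos, Real.rpow_one]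
      field_simp
    calc F ((2:ℝ) • ξ)
        = ∫ x in Q1c d, ‖lam⁻¹ • (v (x + (lam • ξ + lam • ξ)) - v x)‖ ^ p := by
          rw [hF]; simp only [hsm]
      _ ≤ ∫ x in Q1c d, 2 ^ (p-1) *
            (‖lam⁻¹ • (v (x + (lam • ξ + lam • ξ)) - v (x + lam • ξ))‖ ^ p
              + ‖lam⁻¹ • (v (x + lam • ξ) - v x)‖ ^ p) := by
          apply integral_mono_of_nonneg
          · exact Filter.Eventually.of_forall fun x => Real.rpow_nonneg (norm_nonneg _) _
          · exact (((hintD (lam • ξ + lam • ξ) (lam • ξ)).add (hintD0 (lam • ξ))).const_mul _)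
          · apply Filter.Eventually.of_forall
            intro x
            have habc : lam⁻¹ • (v (x + (lam • ξ + lam • ξ)) - v (x + lam • ξ))
                + lam⁻¹ • (v (x + lam • ξ) - v x)
                = lam⁻¹ • (v (x + (lam • ξ + lam • ξ)) - v x) := by
              rw [← smul_add, sub_add_sub_cancel]
            calc ‖lam⁻¹ • (v (x + (lam • ξ + lam • ξ)) - v x)‖ ^ p
                = ‖lam⁻¹ • (v (x + (lam • ξ + lam • ξ)) - v (x + lam • ξ))
                    + lam⁻¹ • (v (x + lam • ξ) - v x)‖ ^ p := by rw [habc]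
              _ ≤ _ := norm_rpow_add_le _ _ hp1
      _ = 2 ^ (p-1) *
            ((∫ x in Q1c d, ‖lam⁻¹ • (v (x + (lam • ξ + lam • ξ)) - v (x + lam • ξ))‖ ^ p)
              + ∫ x in Q1c d, ‖lam⁻¹ • (v (x + lam • ξ) - v x)‖ ^ p) := by
          rw [integral_const_mul, integral_add (hintD (lam • ξ + lam • ξ) (lam • ξ)) (hintD0 (lam • ξ))]
      _ = 2 ^ (p-1) * (F ξ + F ξ) := by
          have hBF : (∫ x in Q1c d, ‖lam⁻¹ • (v (x + lam • ξ) - v x)‖ ^ p) = F ξ := rfl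
          have hw : ∀ g : ZL d, ∀ᵐ x : EuclideanSpace ℝ (Fin d),
              (fun x => ‖lam⁻¹ • (v (x + lam • ξ) - v x)‖ ^ p) ((g : EuclideanSpace ℝ (Fin d)) + x)
                = (fun x => ‖lam⁻¹ • (v (x + lam • ξ) - v x)‖ ^ p) x := by
            intro g
            have h1 := per_lattice v hper (g : EuclideanSpace ℝ (Fin d)) g.2
            have h2 := ae_shift h1 (lam • ξ)
            filter_upwards [h1, h2] with x e1 e2
            rw [show (g : EuclideanSpace ℝ (Fin d)) + x + lam • ξ
                = (x + lam • ξ) + (g : EuclideanSpace ℝ (Fin d)) by abel, e2,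
              show (g : EuclideanSpace ℝ (Fin d)) + x
                = x + (g : EuclideanSpace ℝ (Fin d)) by abel, e1]
          have hshift := shift_integral hd
            (fun x => ‖lam⁻¹ • (v (x + lam • ξ) - v x)‖ ^ p) hw (lam • ξ)
          have hAF : (∫ x in Q1c d,
              ‖lam⁻¹ • (v (x + (lam • ξ + lam • ξ)) - v (x + lam • ξ))‖ ^ p) = F ξ := by
            rw [← hBF, ← hshift]
            congr 1
            funext x
            rw [add_assoc]
          rw [hAF, hBF]
      _ = 2 ^ p * F ξ := by
          rw [← two_mul, show (2:ℝ) ^ (p-1) * (2 * F ξ) = ((2:ℝ) ^ (p-1) * 2) * F ξ by ring, h2]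
  -- measurability of F
  have hFsm : StronglyMeasurable F := by
    have hjm : Measurable (fun q : EuclideanSpace ℝ (Fin d) × EuclideanSpace ℝ (Fin d) =>
        ‖lam⁻¹ • (v (q.2 + lam • q.1) - v q.2)‖ ^ p) := by fun_prop
    exact hjm.stronglyMeasurable.integral_prod_right'
  -- integrability of F on the ball
  have hFint : IntegrableOn F (ball (0 : EuclideanSpace ℝ (Fin d)) r) volume := by
    set K0 : Set (EuclideanSpace ℝ (Fin d)) := closedBall 0 (Real.sqrt d + |lam| * r) with hK0
    have hK0c : IsCompact K0 := isCompact_closedBall _ _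
    set C0 : ℝ := ∫ x in K0, ‖v x‖ ^ p with hC0
    have hI : ∀ c : EuclideanSpace ℝ (Fin d), ‖c‖ ≤ |lam| * r →
        ∫ x in Q1c d, ‖v (x + c)‖ ^ p ≤ C0 := by
      intro c hc
      have himg : ∫ x in Q1c d, ‖v (x + c)‖ ^ p
          = ∫ y in (fun x => x + c) '' Q1c d, ‖v y‖ ^ p := by
        rw [MeasurePreserving.setIntegral_image_emb (measurePreserving_add_right volume c)
          (measurableEmbedding_addRight c) (fun y => ‖v y‖ ^ p) (Q1c d)]
      rw [himg, hC0]
      apply setIntegral_mono_set (hloc _ hK0c)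
        (Filter.Eventually.of_forall fun x => Real.rpow_nonneg (norm_nonneg _) _)
      apply HasSubset.Subset.eventuallyLE
      rintro y ⟨x, hx, rfl⟩
      simp only [hK0, mem_closedBall, dist_zero_right]
      calc ‖x + c‖ ≤ ‖x‖ + ‖c‖ := norm_add_le _ _
        _ ≤ Real.sqrt d + |lam| * r := by
            have := norm_le_sqrt_of_memQ1 hx
            linarith
    set M : ℝ := |lam⁻¹| ^ p * (2 ^ (p-1) * (C0 + C0)) with hM
    refine Measure.integrableOn_of_bounded (M := M) measure_ball_lt_top.ne
      hFsm.aestronglyMeasurable ?_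
    rw [ae_restrict_iff' measurableSet_ball]
    apply Filter.Eventually.of_forall
    intro ξ hξ
    rw [Real.norm_eq_abs, abs_of_nonneg (hFnonneg ξ)]
    have hc : ‖lam • ξ‖ ≤ |lam| * r := by
      rw [norm_smul, Real.norm_eq_abs]
      have : ‖ξ‖ ≤ r := le_of_lt (mem_ball_zero_iff.1 hξ)
      exact mul_le_mul_of_nonneg_left this (abs_nonneg _)
    calc F ξ ≤ ∫ x in Q1c d,
          |lam⁻¹| ^ p * (2 ^ (p-1) * (‖v (x + lam • ξ)‖ ^ p + ‖v x‖ ^ p)) := by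
          apply integral_mono_of_nonneg
          · exact Filter.Eventually.of_forall fun x => Real.rpow_nonneg (norm_nonneg _) _
          · exact (((hKint (lam • ξ)).add hKint0).const_mul _).const_mul _
          · exact Filter.Eventually.of_forall fun x => hb _ _
      _ = |lam⁻¹| ^ p * (2 ^ (p-1) *
            ((∫ x in Q1c d, ‖v (x + lam • ξ)‖ ^ p) + ∫ x in Q1c d, ‖v x‖ ^ p)) := by
          rw [integral_const_mul]
          congr 1
          rw [integral_const_mul, integral_add (hKint (lam • ξ)) hKint0]
      _ ≤ M := by
          rw [hM]
          have h1 := hI (lam • ξ) hc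
          have h2 : ∫ x in Q1c d, ‖v x‖ ^ p ≤ C0 := by
            have h0 : ‖(0 : EuclideanSpace ℝ (Fin d))‖ ≤ |lam| * r := by
              rw [norm_zero]; positivity
            have := hI 0 h0
            simpa using this
          have hpos1 : (0:ℝ) ≤ |lam⁻¹| ^ p := Real.rpow_nonneg (abs_nonneg _) _
          have hpos2 : (0:ℝ) ≤ (2:ℝ) ^ (p-1) := Real.rpow_nonneg (by norm_num) _
          apply mul_le_mul_of_nonneg_left _ hpos1
          apply mul_le_mul_of_nonneg_left _ hpos2
          exact add_le_add h1 h2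
  -- scaling step
  have hfr : Module.finrank ℝ (EuclideanSpace ℝ (Fin d)) = d := finrank_euclideanSpace_fin
  have hscale : ∫ ξ in ball (0 : EuclideanSpace ℝ (Fin d)) r, F ((2:ℝ) • ξ)
      = ((2:ℝ)^d)⁻¹ • ∫ ξ in ball (0 : EuclideanSpace ℝ (Fin d)) (2*r), F ξ := by
    have h := Measure.setIntegral_comp_smul_of_pos
      (volume : Measure (EuclideanSpace ℝ (Fin d))) F
      (ball (0 : EuclideanSpace ℝ (Fin d)) r) two_pos
    rw [hfr] at h
    have hball : (2:ℝ) • ball (0 : EuclideanSpace ℝ (Fin d)) r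
        = ball (0 : EuclideanSpace ℝ (Fin d)) (2*r) := by
      rw [_root_.smul_ball (two_ne_zero (α := ℝ)) (0 : EuclideanSpace ℝ (Fin d)) r, smul_zero]
      norm_num
    rw [h, hball]
  have hmain : ∫ ξ in ball (0 : EuclideanSpace ℝ (Fin d)) (2*r), F ξ
      = (2:ℝ)^d * ∫ ξ in ball (0 : EuclideanSpace ℝ (Fin d)) r, F ((2:ℝ) • ξ) := by
    rw [hscale, smul_eq_mul, ← mul_assoc,
      mul_inv_cancel₀ (by positivity : ((2:ℝ)^d) ≠ 0), one_mul]
  rw [hmain]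
  have hstep : ∫ ξ in ball (0 : EuclideanSpace ℝ (Fin d)) r, F ((2:ℝ) • ξ)
      ≤ ∫ ξ in ball (0 : EuclideanSpace ℝ (Fin d)) r, 2 ^ p * F ξ := by
    apply integral_mono_of_nonneg
    · exact Filter.Eventually.of_forall fun ξ => hFnonneg _
    · exact hFint.const_mul _
    · exact Filter.Eventually.of_forall fun ξ => hkey ξ
  calc (2:ℝ)^d * ∫ ξ in ball (0 : EuclideanSpace ℝ (Fin d)) r, F ((2:ℝ) • ξ)
      ≤ (2:ℝ)^d * ∫ ξ in ball (0 : EuclideanSpace ℝ (Fin d)) r, 2 ^ p * F ξ :=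
        mul_le_mul_of_nonneg_left hstep (by positivity)
    _ = (2:ℝ) ^ ((d:ℝ) + p) * ∫ ξ in ball (0 : EuclideanSpace ℝ (Fin d)) r, F ξ := by
        rw [integral_const_mul, Real.rpow_add two_pos, Real.rpow_natCast]
        ring
end

section
/- Let p ∈ (1,∞), M ∈ ℝ^{m×d}, λ > 0, and let {λ_j} be a sequence of positive reals with λ/2 ≤ λ_j ≤ 2λ for all j. Let {u_j} ⊂ L^p_loc(ℝ^d;ℝ^m) with u_j(x) - Mx Q₁-periodic, ∫_{Q₁} u_j dx = 0, and suppose S := sup_j ∫_{Q_{2/λ}} ∫_{Q₁} |(u_j(x+λ_j ξ)-u_j(x))/λ_j|^p dx dξ < ∞, where Q_r = (0,r)^d. Then sup_j ∫_{Q₁} |u_j(x)|^p dx ≤ 2^{p-1}((2λ)^{d+p} S + d^{p/2}|M|^p) < ∞. -/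
open MeasureTheory Set Pointwise

section Aux

lemma two_point_rpow {p a b : ℝ} (hp : 1 ≤ p) (ha : 0 ≤ a) (hb : 0 ≤ b) :
    (a + b) ^ p ≤ (2:ℝ) ^ (p-1) * (a ^ p + b ^ p) := by
  have h := NNReal.rpow_add_le_mul_rpow_add_rpow a.toNNReal b.toNNReal hp
  have h2 := NNReal.coe_le_coe.2 h
  push_cast [NNReal.coe_rpow] at h2
  rwa [Real.coe_toNNReal a ha, Real.coe_toNNReal b hb] at h2

lemma jensen_rpow {α : Type*} [MeasurableSpace α] {μ : Measure α} [IsProbabilityMeasure μ]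
    {p : ℝ} (hp : 1 < p) {f : α → ℝ} (hf0 : ∀ x, 0 ≤ f x) (hfm : AEStronglyMeasurable f μ)
    (hfi : Integrable (fun x => f x ^ p) μ) :
    (∫ x, f x ∂μ) ^ p ≤ ∫ x, f x ^ p ∂μ := by
  have hp0 : (0:ℝ) ≤ p := by linarith
  have hfint : Integrable f μ := by
    have hbd : Integrable (fun x => 1 + f x ^ p) μ := (integrable_const 1).add hfi
    refine hbd.mono' hfm (Filter.Eventually.of_forall fun x => ?_)
    rw [Real.norm_of_nonneg (hf0 x)]
    rcases le_total (f x) 1 with h | h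
    · have : (0:ℝ) ≤ f x ^ p := Real.rpow_nonneg (hf0 x) p
      linarith
    · have h2 : f x ^ (1:ℝ) ≤ f x ^ p := Real.rpow_le_rpow_of_exponent_le h hp.le
      rw [Real.rpow_one] at h2
      linarith
  have hI0 : 0 ≤ ∫ x, f x ∂μ := integral_nonneg hf0
  have hJ0 : 0 ≤ ∫ x, f x ^ p ∂μ := integral_nonneg (fun x => Real.rpow_nonneg (hf0 x) p)
  have hIl : ENNReal.ofReal (∫ x, f x ∂μ) = ∫⁻ x, ENNReal.ofReal (f x) ∂μ :=
    ofReal_integral_eq_lintegral_ofReal hfint (Filter.Eventually.of_forall hf0)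
  have hJl : ENNReal.ofReal (∫ x, f x ^ p ∂μ) = ∫⁻ x, ENNReal.ofReal (f x) ^ p ∂μ := by
    rw [ofReal_integral_eq_lintegral_ofReal hfi
      (Filter.Eventually.of_forall fun x => Real.rpow_nonneg (hf0 x) p)]
    exact lintegral_congr fun x => (ENNReal.ofReal_rpow_of_nonneg (hf0 x) hp0).symm
  have hconj : p.HolderConjugate (p/(p-1)) := (Real.holderConjugate_iff_eq_conjExponent hp).2 rfl
  have hmeas : AEMeasurable (fun x => ENNReal.ofReal (f x)) μ := hfm.aemeasurable.ennreal_ofReal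
  have hH := ENNReal.lintegral_mul_le_Lp_mul_Lq μ hconj hmeas
    (aemeasurable_const (b := (1:ENNReal)))
  simp only [Pi.mul_apply, mul_one, ENNReal.one_rpow, lintegral_one, measure_univ,
    ENNReal.one_rpow, ENNReal.one_rpow, one_mul] at hH
  have key : ENNReal.ofReal ((∫ x, f x ∂μ) ^ p) ≤ ENNReal.ofReal (∫ x, f x ^ p ∂μ) := by
    rw [← ENNReal.ofReal_rpow_of_nonneg hI0 hp0, hIl, hJl]
    calc (∫⁻ x, ENNReal.ofReal (f x) ∂μ) ^ p
        ≤ ((∫⁻ x, ENNReal.ofReal (f x) ^ p ∂μ) ^ (1/p)) ^ p := by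
          exact ENNReal.rpow_le_rpow hH hp0
      _ = ∫⁻ x, ENNReal.ofReal (f x) ^ p ∂μ := by
          rw [← ENNReal.rpow_mul, one_div, inv_mul_cancel₀ (by linarith : p ≠ 0),
            ENNReal.rpow_one]
  exact (ENNReal.ofReal_le_ofReal_iff hJ0).1 key

variable {d : ℕ} {F : Type*} [NormedAddCommGroup F] [NormedSpace ℝ F]

local notation "E" => EuclideanSpace ℝ (Fin d)

lemma preimage_add_left_vadd (c : E) (s : Set E) : (fun ξ => c + ξ) ⁻¹' (c +ᵥ s) = s := by
  ext y
  simp only [mem_preimage, Set.mem_vadd_set_iff_neg_vadd_mem, vadd_eq_add]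
  rw [neg_add_cancel_left]

lemma setIntegral_comp_add_left' (f : E → F) (c : E) (s : Set E) :
    ∫ ξ in s, f (c + ξ) = ∫ y in c +ᵥ s, f y := by
  have h := (measurePreserving_add_left volume c).setIntegral_preimage_emb
    (MeasurableEquiv.addLeft c).measurableEmbedding f (c +ᵥ s)
  rwa [preimage_add_left_vadd] at h

lemma integrableOn_comp_add_left' (f : E → F) (c : E) (s : Set E) :
    IntegrableOn (fun ξ => f (c + ξ)) s volume ↔ IntegrableOn f (c +ᵥ s) volume := by
  have h := (measurePreserving_add_left volume c).integrableOn_comp_preimage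
    (MeasurableEquiv.addLeft c).measurableEmbedding (f := f) (s := c +ᵥ s)
  rw [preimage_add_left_vadd] at h
  exact h

lemma ae_translate (c : E) {P : E → Prop} (h : ∀ᵐ x, P x) : ∀ᵐ x, P (x + c) :=
  (measurePreserving_add_right volume c).quasiMeasurePreserving.ae h

lemma measurableSet_coord_set (s : Fin d → Set ℝ) (hs : ∀ i, MeasurableSet (s i)) :
    MeasurableSet {x : E | ∀ i, x i ∈ s i} := by
  have : {x : E | ∀ i, x i ∈ s i}
      = (MeasurableEquiv.toLp 2 (Fin d → ℝ)).symm ⁻¹' (Set.univ.pi s) := by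
    ext x; simp [Set.mem_pi]
  rw [this]
  exact (MeasurableEquiv.toLp 2 (Fin d → ℝ)).symm.measurable (MeasurableSet.univ_pi hs)

lemma volume_coord_set (s : Fin d → Set ℝ) (hs : ∀ i, MeasurableSet (s i)) :
    volume {x : E | ∀ i, x i ∈ s i} = ∏ i, volume (s i) := by
  have h1 : {x : E | ∀ i, x i ∈ s i}
      = (MeasurableEquiv.toLp 2 (Fin d → ℝ)).symm ⁻¹' (Set.univ.pi s) := by
    ext x; simp [Set.mem_pi]
  rw [h1, (EuclideanSpace.volume_preserving_symm_measurableEquiv_toLp (Fin d)).measure_preimage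
    (MeasurableSet.univ_pi hs).nullMeasurableSet]
  exact volume_pi_pi s

lemma euclid_norm_le_of_Ioo {r : ℝ} (hr : 0 ≤ r) {x : E} (h : ∀ i, x i ∈ Ioo 0 r) :
    ‖x‖ ≤ Real.sqrt d * r := by
  rw [EuclideanSpace.norm_eq]
  have hb : ∀ i, ‖x i‖ ^ 2 ≤ r ^ 2 := by
    intro i
    obtain ⟨h1, h2⟩ := h i
    rw [Real.norm_eq_abs, abs_of_pos h1]
    nlinarith
  calc Real.sqrt (∑ i, ‖x i‖ ^ 2) ≤ Real.sqrt (∑ _i : Fin d, r ^ 2) :=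
        Real.sqrt_le_sqrt (Finset.sum_le_sum fun i _ => hb i)
    _ = Real.sqrt ((d : ℝ) * r ^ 2) := by rw [Finset.sum_const]; simp [nsmul_eq_mul]
    _ = Real.sqrt d * r := by
        rw [Real.sqrt_mul (Nat.cast_nonneg d), Real.sqrt_sq hr]

end Aux

section Periodic

variable {d m : ℕ}

local notation "E" => EuclideanSpace ℝ (Fin d)
local notation "F" => EuclideanSpace ℝ (Fin m)

lemma periodic_average (V : E → F)
    (hper : ∀ i : Fin d, ∀ᵐ y : E, V (y + EuclideanSpace.single i (1:ℝ)) = V y)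
    (Q1 : Set E) (hQ1 : Q1 = {x : E | ∀ i, x i ∈ Set.Ioo (0:ℝ) 1}) (x : E) :
    ∫ ξ in Q1, V (x + ξ) = ∫ ξ in Q1, V ξ := by
  classical
  set b := (EuclideanSpace.basisFun (Fin d) ℝ).toBasis with hb
  have hbrepr : ∀ (y : E) i, b.repr y i = y i := fun y i => by
    simp [hb, OrthonormalBasis.coe_toBasis_repr_apply, EuclideanSpace.basisFun_repr]
  have hb_apply : ∀ i, b i = EuclideanSpace.single i (1:ℝ) := fun i => by
    simp [hb, OrthonormalBasis.coe_toBasis, EuclideanSpace.basisFun_apply]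
  set D := ZSpan.fundamentalDomain b with hD
  have hDm : MeasurableSet D := ZSpan.fundamentalDomain_measurableSet b
  have hDdesc : D = {y : E | ∀ i, y i ∈ Ico (0:ℝ) 1} := by
    ext y
    simp only [hD, ZSpan.fundamentalDomain, mem_setOf_eq, hbrepr]
  have hDvol : volume D = 1 := by
    rw [hDdesc, volume_coord_set _ fun _ => measurableSet_Ico]
    simp [Real.volume_Ico]
  have hQ1m : MeasurableSet Q1 := by
    rw [hQ1]; exact measurableSet_coord_set _ fun _ => measurableSet_Ioo
  have hQ1vol : volume Q1 = 1 := by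
    rw [hQ1, volume_coord_set _ fun _ => measurableSet_Ioo]
    simp [Real.volume_Ioo]
  have hQ1subD : Q1 ⊆ D := by
    rw [hQ1, hDdesc]; intro y hy i; exact Ioo_subset_Ico_self (hy i)
  have hDQ1ae : D =ᵐ[volume] Q1 := by
    rw [MeasureTheory.ae_eq_set]
    constructor
    · rw [measure_diff hQ1subD hQ1m.nullMeasurableSet (by rw [hQ1vol]; exact ENNReal.one_ne_top),
        hDvol, hQ1vol, tsub_self]
    · rw [diff_eq_empty.2 hQ1subD]; exact measure_empty
  -- upgrade periodicity to the lattice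
  have hgen : ∀ i : Fin d, ∀ᵐ y : E, V (y + b i) = V y := by
    intro i; rw [hb_apply]; exact hper i
  have hshift : ∀ (c c' : E), (∀ᵐ y : E, V (y + c) = V y) → (∀ᵐ y : E, V (y + c') = V y) →
      (∀ᵐ y : E, V (y + (c + c')) = V y) := by
    intro c c' hc hc'
    have h1 : ∀ᵐ y : E, V ((y + c') + c) = V (y + c') := ae_translate c' hc
    filter_upwards [h1, hc'] with y h1y h2y
    have : y + (c + c') = y + c' + c := by abel
    rw [this, h1y, h2y]
  have hneg : ∀ c : E, (∀ᵐ y : E, V (y + c) = V y) → (∀ᵐ y : E, V (y + (-c)) = V y) := by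
    intro c hc
    have h1 : ∀ᵐ y : E, V ((y + (-c)) + c) = V (y + (-c)) := ae_translate (-c) hc
    filter_upwards [h1] with y h1y
    have e : y + -c + c = y := by abel
    rw [e] at h1y
    exact h1y.symm
  have hz : ∀ (k : ℤ) (i : Fin d), ∀ᵐ y : E, V (y + (k : ℝ) • b i) = V y := by
    intro k i
    induction k using Int.induction_on with
    | zero => simp
    | succ k ih =>
        have h2 := hshift _ _ ih (hgen i)
        have : ((k + 1 : ℤ) : ℝ) • b i = (k : ℝ) • b i + b i := by
          push_cast; rw [add_smul, one_smul]
        rw [this]; exact h2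
    | pred k ih =>
        have h2 := hshift _ _ ih (hneg _ (hgen i))
        have e : ((-(k:ℤ) - 1 : ℤ) : ℝ) • b i = ((-(k:ℤ) : ℤ) : ℝ) • b i + -(b i) := by
          push_cast
          rw [sub_smul, one_smul, sub_eq_add_neg]
        rw [e]
        exact h2
  have hcombo : ∀ n : Fin d → ℤ, ∀ᵐ y : E, V (y + ∑ i, (n i : ℝ) • b i) = V y := by
    intro n
    have key : ∀ s : Finset (Fin d), ∀ᵐ y : E, V (y + ∑ i ∈ s, (n i : ℝ) • b i) = V y := by
      intro s
      induction s using Finset.induction_on with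
      | empty => simp
      | insert _ _ hni ih =>
          rw [Finset.sum_insert hni]
          exact hshift _ _ (hz _ _) ih
    exact key Finset.univ
  have hfull : ∀ᵐ y : E, ∀ n : Fin d → ℤ, V (y + ∑ i, (n i : ℝ) • b i) = V y :=
    (MeasureTheory.ae_all_iff).2 hcombo
  set Vt := fun y : E => V (ZSpan.fract b y) with hVt
  have hfloor : ∀ y : E, ((ZSpan.floor b y : E)) = ∑ i, (⌊y i⌋ : ℝ) • b i := by
    intro y
    have h0 : ((ZSpan.floor b y : E)) = ∑ i, (⌊b.repr y i⌋ : ℤ) • (b i) := by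
      rw [ZSpan.floor]
      simp only [Submodule.coe_sum, Submodule.coe_smul_of_tower, Module.Basis.restrictScalars_apply]
    rw [h0]
    exact Finset.sum_congr rfl fun i _ => by
      rw [hbrepr]
      exact (Int.cast_smul_eq_zsmul ℝ _ _).symm
  have haeVt : Vt =ᵐ[volume] V := by
    filter_upwards [hfull] with y hy
    have hfr : ZSpan.fract b y = y + ∑ i, ((-⌊y i⌋ : ℤ) : ℝ) • b i := by
      rw [ZSpan.fract_apply, hfloor, sub_eq_add_neg]
      congr 1
      rw [← Finset.sum_neg_distrib]
      exact Finset.sum_congr rfl fun i _ => by push_cast; rw [neg_smul]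
    show V (ZSpan.fract b y) = V y
    rw [hfr]; exact hy fun i => -⌊y i⌋
  have hVtinv : ∀ (g : ↥(Submodule.span ℤ (Set.range ⇑b))) (y : E), Vt (g +ᵥ y) = Vt y := by
    intro g y
    show V (ZSpan.fract b ((g : E) + y)) = V (ZSpan.fract b y)
    rw [ZSpan.fract_zSpan_add b y g.2]
  have hFD := ZSpan.isAddFundamentalDomain b volume
  haveI : VAddCommClass E ↥(Submodule.span ℤ (Set.range ⇑b)) E :=
    ⟨fun a g y => by show a + ((g : E) + y) = (g : E) + (a + y); abel⟩
  haveI : MeasurableVAdd (↥(Submodule.span ℤ (Set.range ⇑b))) E :=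
    { measurable_const_vadd := fun c => by
        have : Measurable fun y : E => (c : E) + y := measurable_id.const_add _
        exact this,
      measurable_vadd_const := fun y => by
        have : Measurable fun c : ↥(Submodule.span ℤ (Set.range ⇑b)) => (c : E) + y :=
          measurable_subtype_coe.add_const y
        exact this }
  haveI : VAddInvariantMeasure (↥(Submodule.span ℤ (Set.range ⇑b))) E volume :=
    ⟨fun c s _ => measure_preimage_add _ _ _⟩
  haveI : Countable (↥(Submodule.span ℤ (Set.range ⇑b))) := inferInstance
  have hFDx : IsAddFundamentalDomain (↥(Submodule.span ℤ (Set.range ⇑b))) (x +ᵥ D) volume :=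
    hFD.vadd_of_comm x
  calc ∫ ξ in Q1, V (x + ξ)
      = ∫ y in x +ᵥ Q1, V y := setIntegral_comp_add_left' V x Q1
    _ = ∫ y in x +ᵥ D, V y := by
        refine setIntegral_congr_set ?_
        have h1 : ∀ᵐ z : E, z ∈ Q1 ↔ z ∈ D := Filter.eventuallyEq_set.1 hDQ1ae.symm
        have h2 : ∀ᵐ z : E, (z + (-x) ∈ Q1 ↔ z + (-x) ∈ D) := ae_translate (-x) h1
        rw [Filter.eventuallyEq_set]
        filter_upwards [h2] with z hz
        simp only [Set.mem_vadd_set_iff_neg_vadd_mem, vadd_eq_add]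
        rw [show -x + z = z + -x from add_comm _ _]
        exact hz
    _ = ∫ y in x +ᵥ D, Vt y := integral_congr_ae (ae_restrict_of_ae haeVt.symm)
    _ = ∫ y in D, Vt y := hFDx.setIntegral_eq hFD hVtinv
    _ = ∫ y in D, V y := integral_congr_ae (ae_restrict_of_ae haeVt)
    _ = ∫ ξ in Q1, V ξ := setIntegral_congr_set hDQ1ae

end Periodic

set_option maxHeartbeats 1000000 in
/-- uniform `L^p(Q₁)` bound for a sequence with equi-bounded
non-local energies in the critical regime. -/
theorem stmt3 (d m : ℕ) (hd : 1 ≤ d) (hm : 1 ≤ m) (p : ℝ) (hp : 1 < p)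
    (M : EuclideanSpace ℝ (Fin d) →L[ℝ] EuclideanSpace ℝ (Fin m))
    (lam : ℝ) (hlam : 0 < lam)
    (lamSeq : ℕ → ℝ) (hlamSeq : ∀ j, lam / 2 ≤ lamSeq j ∧ lamSeq j ≤ 2 * lam)
    (u : ℕ → EuclideanSpace ℝ (Fin d) → EuclideanSpace ℝ (Fin m))
    (hu : ∀ j, Measurable (u j))
    (hloc : ∀ j, ∀ K : Set (EuclideanSpace ℝ (Fin d)), IsCompact K →
      IntegrableOn (fun x => ‖u j x‖ ^ p) K volume)
    (hper : ∀ j, ∀ i : Fin d, ∀ᵐ x : EuclideanSpace ℝ (Fin d),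
      u j (x + EuclideanSpace.single i (1:ℝ)) - M (x + EuclideanSpace.single i (1:ℝ))
        = u j x - M x)
    (Q1 : Set (EuclideanSpace ℝ (Fin d)))
    (hQ1 : Q1 = {x | ∀ i, x i ∈ Set.Ioo (0:ℝ) 1})
    (Qbig : Set (EuclideanSpace ℝ (Fin d)))
    (hQbig : Qbig = {x | ∀ i, x i ∈ Set.Ioo (0:ℝ) (2 / lam)})
    (hmean : ∀ j, ∫ x in Q1, u j x = 0)
    (S : ℝ)
    (hS : ∀ j, (∫ ξ in Qbig, ∫ x in Q1,
        ‖(lamSeq j)⁻¹ • (u j (x + lamSeq j • ξ) - u j x)‖ ^ p) ≤ S) :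
    ∀ j, (∫ x in Q1, ‖u j x‖ ^ p)
      ≤ (2:ℝ) ^ (p - 1) *
        ((2 * lam) ^ ((d : ℝ) + p) * S + (d : ℝ) ^ (p / 2) * ‖M‖ ^ p) := by
  intro j
  obtain ⟨ht1, ht2⟩ := hlamSeq j
  have hp0 : (0:ℝ) < p := lt_trans one_pos hp
  have hp1 : (1:ℝ) ≤ p := hp.le
  set t := lamSeq j with htdef
  set v := u j with hvdef
  have htpos : (0:ℝ) < t := lt_of_lt_of_le (by positivity) ht1
  have hvmeas : Measurable v := hu j
  have htwo : (0:ℝ) ≤ (2:ℝ) ^ (p - 1) := le_of_lt (Real.rpow_pos_of_pos two_pos _)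
  have hsqd : (0:ℝ) ≤ Real.sqrt d := Real.sqrt_nonneg d
  -- Q1 basics
  have hQ1m : MeasurableSet Q1 := by
    rw [hQ1]; exact measurableSet_coord_set _ fun _ => measurableSet_Ioo
  have hQ1vol : volume Q1 = 1 := by
    rw [hQ1, volume_coord_set _ fun _ => measurableSet_Ioo]
    simp [Real.volume_Ioo]
  haveI hprob : IsProbabilityMeasure (volume.restrict Q1) :=
    ⟨by rw [Measure.restrict_apply_univ]; exact hQ1vol⟩
  have hQ1norm : ∀ x ∈ Q1, ‖x‖ ≤ Real.sqrt d * 1 := by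
    intro x hx
    exact euclid_norm_le_of_Ioo zero_le_one (by rw [hQ1] at hx; exact hx)
  have hQ1bdd : Bornology.IsBounded Q1 := isBounded_iff_forall_norm_le.2 ⟨Real.sqrt d * 1, hQ1norm⟩
  have hK1 : IsCompact (closure Q1) := hQ1bdd.isCompact_closure
  -- Qbig basics
  have hQbigm : MeasurableSet Qbig := by
    rw [hQbig]; exact measurableSet_coord_set _ fun _ => measurableSet_Ioo
  have hQbigvol : volume Qbig ≠ ⊤ := by
    rw [hQbig, volume_coord_set _ fun _ => measurableSet_Ioo]
    exact (ENNReal.prod_lt_top (fun i _ => (by simp [Real.volume_Ioo] : volume (Set.Ioo (0:ℝ) (2/lam)) < ⊤))).ne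
  haveI hfinbig : IsFiniteMeasure (volume.restrict Qbig) :=
    ⟨by rw [Measure.restrict_apply_univ]; exact lt_top_iff_ne_top.2 hQbigvol⟩
  -- integrability of v on compacts
  have hvploc : ∀ K : Set (EuclideanSpace ℝ (Fin d)), IsCompact K →
      IntegrableOn (fun x => ‖v x‖ ^ p) K volume := hloc j
  have hvloc : ∀ K : Set (EuclideanSpace ℝ (Fin d)), IsCompact K → IntegrableOn v K volume := by
    intro K hK
    haveI : IsFiniteMeasure (volume.restrict K) :=
      ⟨by rw [Measure.restrict_apply_univ]; exact hK.measure_lt_top⟩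
    have h2 : MemLp (fun x => ‖v x‖ ^ p) 1 (volume.restrict K) :=
      memLp_one_iff_integrable.2 (hvploc K hK)
    have hne0 : ENNReal.ofReal p ≠ 0 := by
      simp only [ne_eq, ENNReal.ofReal_eq_zero, not_le]; exact hp0
    have h3 : MemLp v (ENNReal.ofReal p) (volume.restrict K) := by
      have h4 := memLp_norm_rpow_iff (q := ENNReal.ofReal p) (p := ENNReal.ofReal p)
        (hvmeas.aestronglyMeasurable : AEStronglyMeasurable v (volume.restrict K)) hne0 ENNReal.ofReal_ne_top
      rw [ENNReal.div_self hne0 ENNReal.ofReal_ne_top, ENNReal.toReal_ofReal hp0.le] at h4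
      exact h4.1 h2
    exact h3.integrable (by
      rw [← ENNReal.ofReal_one]; exact ENNReal.ofReal_le_ofReal hp1)
  have hvpQ1 : IntegrableOn (fun x => ‖v x‖ ^ p) Q1 volume := (hvploc _ hK1).mono_set subset_closure
  have hvQ1 : IntegrableOn v Q1 volume := (hvloc _ hK1).mono_set subset_closure
  -- translated integrability
  have hvaddK : ∀ c : EuclideanSpace ℝ (Fin d), IsCompact (closure (c +ᵥ Q1)) := by
    intro c
    refine Bornology.IsBounded.isCompact_closure ?_
    refine isBounded_iff_forall_norm_le.2 ⟨‖c‖ + Real.sqrt d * 1, ?_⟩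
    rintro y ⟨z, hz, rfl⟩
    have hz' := hQ1norm z hz
    calc ‖c +ᵥ z‖ = ‖c + z‖ := rfl
      _ ≤ ‖c‖ + ‖z‖ := norm_add_le _ _
      _ ≤ ‖c‖ + Real.sqrt d * 1 := by linarith
  have hvtrans : ∀ c, IntegrableOn (fun ξ => v (c + ξ)) Q1 volume := fun c =>
    (integrableOn_comp_add_left' v c Q1).2 ((hvloc _ (hvaddK c)).mono_set subset_closure)
  have hvptrans : ∀ c, IntegrableOn (fun ξ => ‖v (c + ξ)‖ ^ p) Q1 volume := fun c =>
    (integrableOn_comp_add_left' (fun y => ‖v y‖ ^ p) c Q1).2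
      ((hvploc _ (hvaddK c)).mono_set subset_closure)
  -- master constant
  set Kb : Set (EuclideanSpace ℝ (Fin d)) :=
    Metric.closedBall (0 : EuclideanSpace ℝ (Fin d)) (Real.sqrt d * 5 + 1) with hKb
  have hKbcomp : IsCompact Kb := isCompact_closedBall _ _
  set C0 : ℝ := ∫ y in Kb, ‖v y‖ ^ p with hC0def
  have hC0nonneg : (0:ℝ) ≤ C0 := integral_nonneg fun y => by positivity
  have hC0 : ∀ c : EuclideanSpace ℝ (Fin d), ‖c‖ ≤ Real.sqrt d * 4 →
      (∫ ξ in Q1, ‖v (c + ξ)‖ ^ p) ≤ C0 := by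
    intro c hc
    rw [setIntegral_comp_add_left' (fun y => ‖v y‖ ^ p) c Q1]
    refine setIntegral_mono_set (hvploc _ hKbcomp)
      (Filter.Eventually.of_forall fun y => by positivity) (HasSubset.Subset.eventuallyLE ?_)
    rintro y ⟨z, hz, rfl⟩
    have hz' := hQ1norm z hz
    have h1 : ‖c +ᵥ z‖ ≤ Real.sqrt d * 5 + 1 := by
      calc ‖c +ᵥ z‖ = ‖c + z‖ := rfl
        _ ≤ ‖c‖ + ‖z‖ := norm_add_le _ _
        _ ≤ Real.sqrt d * 5 + 1 := by linarith
    exact mem_closedBall_zero_iff.2 h1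
  -- measurability of kernel
  have hFmeas : Measurable (fun q : (EuclideanSpace ℝ (Fin d)) × (EuclideanSpace ℝ (Fin d)) =>
      ‖v (q.1 + q.2) - v q.1‖ ^ p) :=
    (Real.continuous_rpow_const hp0.le).measurable.comp
      (((hvmeas.comp (measurable_fst.add measurable_snd)).sub
        (hvmeas.comp measurable_fst)).norm)
  have hFsm : StronglyMeasurable (fun q : (EuclideanSpace ℝ (Fin d)) × (EuclideanSpace ℝ (Fin d)) =>
      ‖v (q.1 + q.2) - v q.1‖ ^ p) := hFmeas.stronglyMeasurable
  -- sections integrable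
  have hsect : ∀ x, Integrable (fun ξ => ‖v (x + ξ) - v x‖ ^ p) (volume.restrict Q1) := by
    intro x
    have hbd : Integrable (fun ξ => (2:ℝ)^(p-1) * (‖v (x + ξ)‖ ^ p + ‖v x‖ ^ p))
        (volume.restrict Q1) := ((hvptrans x).add (integrable_const _)).const_mul _
    refine hbd.mono' ?_ (Filter.Eventually.of_forall fun ξ => ?_)
    · exact ((Real.continuous_rpow_const hp0.le).measurable.comp
        (((hvmeas.comp (measurable_const.add measurable_id)).sub
          measurable_const).norm)).aestronglyMeasurable
    · rw [Real.norm_of_nonneg (by positivity)]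
      calc ‖v (x + ξ) - v x‖ ^ p ≤ (‖v (x + ξ)‖ + ‖v x‖) ^ p :=
            Real.rpow_le_rpow (norm_nonneg _) (norm_sub_le _ _) hp0.le
        _ ≤ _ := two_point_rpow hp1 (norm_nonneg _) (norm_nonneg _)
  -- G
  set G : EuclideanSpace ℝ (Fin d) → ℝ := fun x => ∫ ξ in Q1, ‖v (x + ξ) - v x‖ ^ p with hGdef
  have hGnonneg : ∀ x, 0 ≤ G x := fun x => integral_nonneg fun ξ => by positivity
  have hGsm : StronglyMeasurable G := hFsm.integral_prod_right'
  have hGbound : ∀ x ∈ Q1, G x ≤ (2:ℝ)^(p-1) * (C0 + ‖v x‖ ^ p) := by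
    intro x hx
    have h1 : G x ≤ ∫ ξ in Q1, (2:ℝ)^(p-1) * (‖v (x + ξ)‖ ^ p + ‖v x‖ ^ p) := by
      refine integral_mono_of_nonneg (Filter.Eventually.of_forall fun ξ => by positivity)
        (((hvptrans x).add (integrable_const _)).const_mul _)
        (Filter.Eventually.of_forall fun ξ => ?_)
      calc ‖v (x + ξ) - v x‖ ^ p ≤ (‖v (x + ξ)‖ + ‖v x‖) ^ p :=
            Real.rpow_le_rpow (norm_nonneg _) (norm_sub_le _ _) hp0.le
        _ ≤ _ := two_point_rpow hp1 (norm_nonneg _) (norm_nonneg _)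
    rw [integral_const_mul, integral_add (hvptrans x) (integrable_const _), integral_const] at h1
    have h2 : (∫ ξ in Q1, ‖v (x + ξ)‖ ^ p) ≤ C0 := by
      refine hC0 x ?_
      have := hQ1norm x hx
      nlinarith
    have h3 : (volume.restrict Q1).real Set.univ • ‖v x‖ ^ p = ‖v x‖ ^ p := by
      simp [measure_univ]
    rw [h3] at h1
    calc G x ≤ (2:ℝ)^(p-1) * ((∫ ξ in Q1, ‖v (x + ξ)‖ ^ p) + ‖v x‖ ^ p) := h1
      _ ≤ (2:ℝ)^(p-1) * (C0 + ‖v x‖ ^ p) := by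
          refine mul_le_mul_of_nonneg_left (by linarith) htwo
  have hGint : IntegrableOn G Q1 volume := by
    refine Integrable.mono' (((integrable_const C0).add hvpQ1).const_mul ((2:ℝ)^(p-1)))
      hGsm.aestronglyMeasurable.restrict ?_
    rw [ae_restrict_iff' hQ1m]
    exact Filter.Eventually.of_forall fun x hx => by
      rw [Real.norm_of_nonneg (hGnonneg x)]; exact hGbound x hx
  -- step: mean value identity
  have hMcont : Continuous fun y : EuclideanSpace ℝ (Fin d) => (M y : EuclideanSpace ℝ (Fin m)) :=
    M.continuous
  have hMint : IntegrableOn (fun y : EuclideanSpace ℝ (Fin d) => (M y : EuclideanSpace ℝ (Fin m)))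
      Q1 volume := (hMcont.continuousOn.integrableOn_compact hK1).mono_set subset_closure
  have hMx : ∀ x : EuclideanSpace ℝ (Fin d), (∫ ξ in Q1, v (x + ξ)) = M x := by
    intro x
    have hPA := periodic_average (fun y => v y - M y) (hper j) Q1 hQ1 x
    have hMtr : IntegrableOn (fun ξ : EuclideanSpace ℝ (Fin d) =>
        (M (x + ξ) : EuclideanSpace ℝ (Fin m))) Q1 volume :=
      (((hMcont.comp (continuous_const.add continuous_id)).continuousOn.integrableOn_compact hK1).mono_set
        subset_closure)
    have hVtr : IntegrableOn (fun ξ => v (x + ξ) - M (x + ξ)) Q1 volume := (hvtrans x).sub hMtr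
    have hMxplus : IntegrableOn (fun ξ : EuclideanSpace ℝ (Fin d) =>
        ((M x + M ξ : EuclideanSpace ℝ (Fin m)))) Q1 volume := (integrable_const _).add hMint
    have hsplit : (∫ ξ in Q1, v (x + ξ))
        = (∫ ξ in Q1, (v (x + ξ) - M (x + ξ)))
            + ∫ ξ in Q1, ((M x + M ξ : EuclideanSpace ℝ (Fin m))) := by
      rw [← integral_add hVtr hMxplus]
      refine integral_congr_ae (Filter.Eventually.of_forall fun ξ => ?_)
      show v (x + ξ) = (v (x + ξ) - M (x + ξ)) + (M x + M ξ)
      rw [map_add]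
      abel
    have hconst : (∫ ξ in Q1, ((M x + M ξ : EuclideanSpace ℝ (Fin m))))
        = M x + ∫ ξ in Q1, (M ξ : EuclideanSpace ℝ (Fin m)) := by
      rw [integral_add (integrable_const _) hMint, integral_const]
      simp [measure_univ]
    have hVm : (∫ ξ in Q1, (v ξ - M ξ)) = - ∫ ξ in Q1, (M ξ : EuclideanSpace ℝ (Fin m)) := by
      rw [integral_sub hvQ1 hMint, hmean j, zero_sub]
    rw [hsplit, hPA, hVm, hconst]
    abel
  -- Jensen pointwise
  have hJen : ∀ x, ‖v x - M x‖ ^ p ≤ G x := by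
    intro x
    have hmean1 : v x - M x = ∫ ξ in Q1, (v x - v (x + ξ)) := by
      rw [integral_sub (integrable_const _) (hvtrans x), integral_const, hMx x]
      simp [measure_univ]
    have hstep1 : ‖v x - M x‖ ≤ ∫ ξ in Q1, ‖v x - v (x + ξ)‖ := by
      rw [hmean1]; exact norm_integral_le_integral_norm _
    have hstep2 : (∫ ξ in Q1, ‖v x - v (x + ξ)‖) ^ p ≤ ∫ ξ in Q1, ‖v x - v (x + ξ)‖ ^ p := by
      refine jensen_rpow hp (fun ξ => norm_nonneg _) ?_ ?_
      · exact ((measurable_const.sub (hvmeas.comp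
          (measurable_const.add measurable_id))).norm).aestronglyMeasurable
      · refine (hsect x).congr (Filter.Eventually.of_forall fun ξ => ?_)
        show ‖v (x + ξ) - v x‖ ^ p = ‖v x - v (x + ξ)‖ ^ p
        rw [norm_sub_rev]
    calc ‖v x - M x‖ ^ p ≤ (∫ ξ in Q1, ‖v x - v (x + ξ)‖) ^ p :=
          Real.rpow_le_rpow (norm_nonneg _) hstep1 hp0.le
      _ ≤ ∫ ξ in Q1, ‖v x - v (x + ξ)‖ ^ p := hstep2
      _ = G x := integral_congr_ae (Filter.Eventually.of_forall fun ξ => by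
            show ‖v x - v (x + ξ)‖ ^ p = ‖v (x + ξ) - v x‖ ^ p
            rw [norm_sub_rev])
  have hA : (∫ x in Q1, ‖v x - M x‖ ^ p) ≤ ∫ x in Q1, G x :=
    integral_mono_of_nonneg (Filter.Eventually.of_forall fun x => by positivity) hGint
      (Filter.Eventually.of_forall hJen)
  -- Fubini
  set g : EuclideanSpace ℝ (Fin d) → ℝ := fun ξ => ∫ x in Q1, ‖v (x + ξ) - v x‖ ^ p with hgdef
  have hgnonneg : ∀ ξ, 0 ≤ g ξ := fun ξ => integral_nonneg fun x => by positivity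
  have hgsm : StronglyMeasurable g := hFsm.integral_prod_left'
  have hswap : (∫ x in Q1, G x) = ∫ ξ in Q1, g ξ := by
    have hFint : Integrable (Function.uncurry fun x ξ => ‖v (x + ξ) - v x‖ ^ p)
        ((volume.restrict Q1).prod (volume.restrict Q1)) := by
      refine (integrable_prod_iff hFsm.aestronglyMeasurable).2
        ⟨Filter.Eventually.of_forall fun x => hsect x, ?_⟩
      refine hGint.congr (Filter.Eventually.of_forall fun x => ?_)
      exact integral_congr_ae (Filter.Eventually.of_forall fun ξ =>
        (Real.norm_of_nonneg (by positivity)).symm)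
    exact integral_integral_swap hFint
  -- change of variables
  have hhdef : ∀ ξ : EuclideanSpace ℝ (Fin d),
      (∫ x in Q1, ‖t⁻¹ • (v (x + t • ξ) - v x)‖ ^ p) = t⁻¹ ^ p * g (t • ξ) := by
    intro ξ
    rw [← integral_const_mul]
    refine integral_congr_ae (Filter.Eventually.of_forall fun x => ?_)
    show ‖t⁻¹ • (v (x + t • ξ) - v x)‖ ^ p = t⁻¹ ^ p * ‖v (x + t • ξ) - v x‖ ^ p
    rw [norm_smul, Real.norm_eq_abs, abs_of_pos (inv_pos.2 htpos),
      Real.mul_rpow (le_of_lt (inv_pos.2 htpos)) (norm_nonneg _)]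
  have hsubbig : t⁻¹ • Q1 ⊆ Qbig := by
    rintro y ⟨z, hz, rfl⟩
    rw [hQ1] at hz; rw [hQbig]
    intro i
    have h1 := (hz i).1
    have h2 := (hz i).2
    constructor
    · show (0:ℝ) < (t⁻¹ • z) i
      rw [PiLp.smul_apply, smul_eq_mul]
      positivity
    · show (t⁻¹ • z) i < 2 / lam
      rw [PiLp.smul_apply, smul_eq_mul]
      have h3 : t⁻¹ * z i < t⁻¹ * 1 := by
        exact mul_lt_mul_of_pos_left h2 (inv_pos.2 htpos)
      have h4 : t⁻¹ * 1 ≤ 2 / lam := by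
        rw [mul_one, inv_eq_one_div, div_le_div_iff₀ htpos hlam]
        linarith
      linarith
  have hQbignorm : ∀ ξ ∈ Qbig, ‖ξ‖ ≤ Real.sqrt d * (2/lam) := by
    intro ξ hξ
    exact euclid_norm_le_of_Ioo (by positivity) (by rw [hQbig] at hξ; exact hξ)
  have hxtr : ∀ c : EuclideanSpace ℝ (Fin d),
      IntegrableOn (fun x => ‖v (x + c)‖ ^ p) Q1 volume := by
    intro c
    refine (hvptrans c).congr (Filter.Eventually.of_forall fun x => ?_)
    show ‖v (c + x)‖ ^ p = ‖v (x + c)‖ ^ p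
    rw [add_comm c x]
  have hxtr_eq : ∀ c : EuclideanSpace ℝ (Fin d),
      (∫ x in Q1, ‖v (x + c)‖ ^ p) = ∫ ξ in Q1, ‖v (c + ξ)‖ ^ p := by
    intro c
    refine integral_congr_ae (Filter.Eventually.of_forall fun x => ?_)
    show ‖v (x + c)‖ ^ p = ‖v (c + x)‖ ^ p
    rw [add_comm x c]
  have hgtbound : ∀ ξ ∈ Qbig, g (t • ξ) ≤ (2:ℝ)^(p-1) * (C0 + ∫ x in Q1, ‖v x‖ ^ p) := by
    intro ξ hξ
    have hc : ‖t • ξ‖ ≤ Real.sqrt d * 4 := by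
      rw [norm_smul, Real.norm_eq_abs, abs_of_pos htpos]
      calc t * ‖ξ‖ ≤ (2*lam) * (Real.sqrt d * (2/lam)) :=
            mul_le_mul ht2 (hQbignorm ξ hξ) (norm_nonneg _) (by positivity)
        _ = Real.sqrt d * 4 := by field_simp; ring
    have h1 : g (t • ξ) ≤ ∫ x in Q1, (2:ℝ)^(p-1) * (‖v (x + t • ξ)‖ ^ p + ‖v x‖ ^ p) := by
      refine integral_mono_of_nonneg (Filter.Eventually.of_forall fun x => by positivity)
        (((hxtr (t • ξ)).add hvpQ1).const_mul _) (Filter.Eventually.of_forall fun x => ?_)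
      calc ‖v (x + t • ξ) - v x‖ ^ p ≤ (‖v (x + t • ξ)‖ + ‖v x‖) ^ p :=
            Real.rpow_le_rpow (norm_nonneg _) (norm_sub_le _ _) hp0.le
        _ ≤ _ := two_point_rpow hp1 (norm_nonneg _) (norm_nonneg _)
    rw [integral_const_mul, integral_add (hxtr (t • ξ)) hvpQ1] at h1
    have h2 : (∫ x in Q1, ‖v (x + t • ξ)‖ ^ p) ≤ C0 := by
      rw [hxtr_eq (t • ξ)]; exact hC0 _ hc
    calc g (t • ξ) ≤ (2:ℝ)^(p-1) * ((∫ x in Q1, ‖v (x + t • ξ)‖ ^ p) + ∫ x in Q1, ‖v x‖ ^ p) := h1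
      _ ≤ _ := by
          refine mul_le_mul_of_nonneg_left (by linarith) htwo
  have hS0 : (0:ℝ) ≤ S :=
    le_trans (integral_nonneg fun ξ => integral_nonneg fun x => by positivity) (hS j)
  have hCOV : (∫ ξ in Q1, g ξ) ≤ (2*lam) ^ ((d:ℝ) + p) * S := by
    have h3 : t • (t⁻¹ • Q1) = Q1 := by
      ext y
      rw [mem_smul_set_iff_inv_smul_mem₀ htpos.ne',
        mem_smul_set_iff_inv_smul_mem₀ (inv_ne_zero htpos.ne'), inv_inv, smul_smul,
        mul_inv_cancel₀ htpos.ne', one_smul]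
    have h2 := MeasureTheory.Measure.setIntegral_comp_smul_of_pos volume g (t⁻¹ • Q1) htpos
    rw [finrank_euclideanSpace_fin, h3, smul_eq_mul] at h2
    have h1 : (∫ ξ in Q1, g ξ) = t ^ (d:ℕ) * ∫ ξ in t⁻¹ • Q1, g (t • ξ) := by
      rw [h2, ← mul_assoc, mul_inv_cancel₀ (by positivity), one_mul]
    have h4 : (∫ ξ in t⁻¹ • Q1, g (t • ξ)) = t ^ p * ∫ ξ in t⁻¹ • Q1, t⁻¹ ^ p * g (t • ξ) := by
      rw [← integral_const_mul]
      refine integral_congr_ae (Filter.Eventually.of_forall fun ξ => ?_)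
      show g (t • ξ) = t ^ p * (t⁻¹ ^ p * g (t • ξ))
      rw [← mul_assoc, ← Real.mul_rpow htpos.le (le_of_lt (inv_pos.2 htpos)),
        mul_inv_cancel₀ htpos.ne', Real.one_rpow, one_mul]
    have hint_h : IntegrableOn (fun ξ => t⁻¹ ^ p * g (t • ξ)) Qbig volume := by
      refine Integrable.mono'
        (integrable_const (t⁻¹ ^ p * ((2:ℝ)^(p-1) * (C0 + ∫ x in Q1, ‖v x‖ ^ p)))) ?_ ?_
      · exact ((hgsm.comp_measurable (measurable_id.const_smul t)).const_mul
          _).aestronglyMeasurable.restrict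
      · rw [ae_restrict_iff' hQbigm]
        refine Filter.Eventually.of_forall fun ξ hξ => ?_
        rw [Real.norm_of_nonneg (by positivity)]
        exact mul_le_mul_of_nonneg_left (hgtbound ξ hξ) (by positivity)
    have h5 : (∫ ξ in t⁻¹ • Q1, t⁻¹ ^ p * g (t • ξ)) ≤ ∫ ξ in Qbig, t⁻¹ ^ p * g (t • ξ) := by
      refine setIntegral_mono_set hint_h
        (Filter.Eventually.of_forall fun ξ => by positivity)
        (HasSubset.Subset.eventuallyLE hsubbig)
    have h6 : (∫ ξ in Qbig, t⁻¹ ^ p * g (t • ξ)) ≤ S := by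
      refine le_trans (le_of_eq ?_) (hS j)
      exact integral_congr_ae (Filter.Eventually.of_forall fun ξ => (hhdef ξ).symm)
    have hrpow_eq : t ^ (d:ℕ) * t ^ p = t ^ ((d:ℝ) + p) := by
      rw [Real.rpow_add htpos, Real.rpow_natCast]
    have hrpow_le : t ^ ((d:ℝ) + p) ≤ (2*lam) ^ ((d:ℝ) + p) :=
      Real.rpow_le_rpow htpos.le ht2 (by positivity)
    calc (∫ ξ in Q1, g ξ) = t ^ (d:ℕ) * (t ^ p * ∫ ξ in t⁻¹ • Q1, t⁻¹ ^ p * g (t • ξ)) := by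
          rw [h1, h4]
      _ ≤ t ^ (d:ℕ) * (t ^ p * S) := by
          refine mul_le_mul_of_nonneg_left ?_ (by positivity)
          refine mul_le_mul_of_nonneg_left (le_trans h5 h6) (by positivity)
      _ = (t ^ (d:ℕ) * t ^ p) * S := by ring
      _ ≤ (2*lam) ^ ((d:ℝ) + p) * S := by
          rw [hrpow_eq]
          exact mul_le_mul_of_nonneg_right hrpow_le hS0
  -- B bound
  have hMpt : ∀ x ∈ Q1, ‖(M x : EuclideanSpace ℝ (Fin m))‖ ^ p ≤ (d:ℝ)^(p/2) * ‖M‖^p := by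
    intro x hx
    have h1 : ‖(M x : EuclideanSpace ℝ (Fin m))‖ ≤ ‖M‖ * Real.sqrt d := by
      calc ‖(M x : EuclideanSpace ℝ (Fin m))‖ ≤ ‖M‖ * ‖x‖ := M.le_opNorm x
        _ ≤ ‖M‖ * (Real.sqrt d * 1) := mul_le_mul_of_nonneg_left (hQ1norm x hx) (norm_nonneg M)
        _ = ‖M‖ * Real.sqrt d := by ring
    calc ‖(M x : EuclideanSpace ℝ (Fin m))‖ ^ p ≤ (‖M‖ * Real.sqrt d) ^ p :=
          Real.rpow_le_rpow (norm_nonneg _) h1 hp0.le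
      _ = ‖M‖^p * (Real.sqrt d)^p := Real.mul_rpow (norm_nonneg _) (Real.sqrt_nonneg _)
      _ = (d:ℝ)^(p/2) * ‖M‖^p := by
          rw [Real.sqrt_eq_rpow, ← Real.rpow_mul (Nat.cast_nonneg d)]
          rw [show (1/2) * p = p/2 by ring]
          ring
  have hMp : IntegrableOn (fun x => ‖(M x : EuclideanSpace ℝ (Fin m))‖ ^ p) Q1 volume := by
    refine Integrable.mono' (integrable_const ((d:ℝ)^(p/2) * ‖M‖^p))
      (((Real.continuous_rpow_const hp0.le).measurable.comp hMcont.measurable.norm).aestronglyMeasurable.restrict) ?_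
    rw [ae_restrict_iff' hQ1m]
    refine Filter.Eventually.of_forall fun x hx => ?_
    rw [Real.norm_of_nonneg (by positivity)]
    exact hMpt x hx
  have hB : (∫ x in Q1, ‖(M x : EuclideanSpace ℝ (Fin m))‖ ^ p) ≤ (d:ℝ) ^ (p/2) * ‖M‖ ^ p := by
    have h1 : (∫ x in Q1, ‖(M x : EuclideanSpace ℝ (Fin m))‖ ^ p)
        ≤ ∫ _x in Q1, ((d:ℝ)^(p/2) * ‖M‖^p) := by
      exact integral_mono_of_nonneg (Filter.Eventually.of_forall fun x => by positivity)
        (integrable_const _) ((ae_restrict_iff' hQ1m).2 (Filter.Eventually.of_forall hMpt))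
    rw [integral_const] at h1
    simpa [measure_univ] using h1
  -- final pointwise split and assembly
  have hintsub : IntegrableOn (fun x => ‖v x - M x‖ ^ p) Q1 volume := by
    refine Integrable.mono' ((hvpQ1.add hMp).const_mul ((2:ℝ)^(p-1)))
      (((Real.continuous_rpow_const hp0.le).measurable.comp (hvmeas.sub hMcont.measurable).norm).aestronglyMeasurable.restrict) ?_
    refine Filter.Eventually.of_forall fun x => ?_
    rw [Real.norm_of_nonneg (by positivity)]
    calc ‖v x - M x‖ ^ p ≤ (‖v x‖ + ‖(M x : EuclideanSpace ℝ (Fin m))‖) ^ p :=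
          Real.rpow_le_rpow (norm_nonneg _) (norm_sub_le _ _) hp0.le
      _ ≤ _ := two_point_rpow hp1 (norm_nonneg _) (norm_nonneg _)
  have hsplit2 : ∀ x, ‖v x‖ ^ p
      ≤ (2:ℝ)^(p-1) * (‖v x - M x‖^p + ‖(M x : EuclideanSpace ℝ (Fin m))‖^p) := by
    intro x
    calc ‖v x‖^p = ‖(v x - M x) + M x‖^p := by rw [sub_add_cancel]
      _ ≤ (‖v x - M x‖ + ‖(M x : EuclideanSpace ℝ (Fin m))‖)^p :=
          Real.rpow_le_rpow (norm_nonneg _) (norm_add_le _ _) hp0.le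
      _ ≤ _ := two_point_rpow hp1 (norm_nonneg _) (norm_nonneg _)
  calc (∫ x in Q1, ‖v x‖ ^ p)
      ≤ ∫ x in Q1, (2:ℝ)^(p-1) * (‖v x - M x‖^p + ‖(M x : EuclideanSpace ℝ (Fin m))‖^p) :=
        integral_mono_of_nonneg (Filter.Eventually.of_forall fun x => by positivity)
          ((hintsub.add hMp).const_mul _) (Filter.Eventually.of_forall hsplit2)
    _ = (2:ℝ)^(p-1) * ((∫ x in Q1, ‖v x - M x‖^p)
          + ∫ x in Q1, ‖(M x : EuclideanSpace ℝ (Fin m))‖^p) := by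
        rw [integral_const_mul, integral_add hintsub hMp]
    _ ≤ (2:ℝ)^(p-1) * ((2*lam)^((d:ℝ)+p) * S + (d:ℝ)^(p/2) * ‖M‖^p) := by
        refine mul_le_mul_of_nonneg_left (add_le_add ?_ hB) htwo
        calc (∫ x in Q1, ‖v x - M x‖^p) ≤ ∫ x in Q1, G x := hA
          _ = ∫ ξ in Q1, g ξ := hswap
          _ ≤ _ := hCOV
end
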